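/- Let G be a simple connected graph with E₀ edges and circuit rank r. For all n ≥ 0, Kf*(sⁿ(G)) = 8ⁿ·Kf*(G) + ((8ⁿ − 2ⁿ)/3)·(2r − 1)·E₀. -/

import Mathlib

/-- The subdivision graph `s(G)`: one new vertex inserted on each edge of `G`. -/
def subdivision {V : Type} (G : SimpleGraph V) : SimpleGraph (V ⊕ G.edgeSet) where
  Adj x y :=
    match x, y with
    | Sum.inl v, Sum.inr e => v ∈ (e : Sym2 V)
    | Sum.inr e, Sum.inl v => v ∈ (e : Sym2 V)
    | _, _ => False
  symm := by constructor; rintro (v | e) (w | f) h <;> exact h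
  loopless := by constructor; rintro (v | e) h <;> exact h

/-- The iterated subdivision `sⁿ(G)`, as a pair (vertex type, graph). -/
def iterSubdiv {V : Type} (G : SimpleGraph V) : ℕ → (W : Type) × SimpleGraph W
  | 0 => ⟨V, G⟩
  | n + 1 => ⟨_, subdivision (iterSubdiv G n).2⟩

instance iterSubdivFinite {V : Type} [Finite V] (G : SimpleGraph V) :
    ∀ n, Finite (iterSubdiv G n).1
  | 0 => ‹Finite V›
  | n + 1 => by
    haveI := iterSubdivFinite G n
    exact inferInstanceAs (Finite ((iterSubdiv G n).1 ⊕ (iterSubdiv G n).2.edgeSet))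

open Classical in
noncomputable def normAdj {V : Type} (G : SimpleGraph V) : Matrix V V ℝ :=
  Matrix.of fun i j =>
    if G.Adj i j then
      1 / Real.sqrt ((Nat.card (G.neighborSet i) : ℝ) * (Nat.card (G.neighborSet j) : ℝ))
    else 0

open Classical in
noncomputable def normLap {V : Type} (G : SimpleGraph V) : Matrix V V ℝ :=
  1 - normAdj G

theorem normAdj_isHermitian {V : Type} (G : SimpleGraph V) : (normAdj G).IsHermitian := by
  unfold Matrix.IsHermitian
  ext i j
  simp only [Matrix.conjTranspose_apply, normAdj, Matrix.of_apply, star_trivial]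
  rw [G.adj_comm]
  rcases em (G.Adj i j) with h | h <;> simp [h, mul_comm]

open Classical in
theorem normLap_isHermitian {V : Type} (G : SimpleGraph V) : (normLap G).IsHermitian :=
  Matrix.isHermitian_one.sub (normAdj_isHermitian G)

/-- `μ` is an eigenvalue of the matrix `M`. -/
def IsEigenvalueM {V : Type} [Finite V] (M : Matrix V V ℝ) (μ : ℝ) : Prop :=
  haveI := Fintype.ofFinite V
  haveI := Classical.decEq V
  Module.End.HasEigenvalue (Matrix.toLin' M) μ

/-- The multiplicity of `μ` as an eigenvalue of `M` (dimension of the eigenspace). -/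
noncomputable def eigMult {V : Type} [Finite V] (M : Matrix V V ℝ) (μ : ℝ) : ℕ :=
  haveI := Fintype.ofFinite V
  haveI := Classical.decEq V
  Module.finrank ℝ ↥(Module.End.eigenspace (Matrix.toLin' M) μ)

open Classical in
noncomputable def kemeny {V : Type} [Finite V] (G : SimpleGraph V) : ℝ :=
  haveI := Fintype.ofFinite V
  haveI := Classical.decEq V
  ∑ i : V, (if (normLap_isHermitian G).eigenvalues i = 0 then 0
            else ((normLap_isHermitian G).eigenvalues i)⁻¹)

/-- The multiplicative degree-Kirchhoff index `Kf* = 2|E| · Σ_{k≥2} 1/λ_k`. -/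
noncomputable def kirchhoffStar {V : Type} [Finite V] (G : SimpleGraph V) : ℝ :=
  2 * (Nat.card G.edgeSet : ℝ) * kemeny G

/-- The number of spanning trees of `G`. -/
noncomputable def numSpanningTrees {V : Type} (G : SimpleGraph V) : ℕ :=
  Nat.card {H : G.Subgraph // H.IsSpanning ∧ H.coe.IsTree}

set_option linter.unusedSectionVars false
set_option maxHeartbeats 1000000
open Matrix

namespace KfAux

variable {n : Type} [Fintype n] [DecidableEq n]

lemma det_smul_one_add_smul (M : Matrix n n ℝ) (hM : M.IsHermitian) (c a : ℝ) :
    det (c • (1 : Matrix n n ℝ) + a • M) = ∏ i, (c + a * hM.eigenvalues i) := by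
  have hU : (hM.eigenvectorUnitary : Matrix n n ℝ) * (star hM.eigenvectorUnitary : Matrix n n ℝ) = 1 :=
    Matrix.mem_unitaryGroup_iff.mp hM.eigenvectorUnitary.2
  have hU' : (star hM.eigenvectorUnitary : Matrix n n ℝ) * (hM.eigenvectorUnitary : Matrix n n ℝ) = 1 :=
    Matrix.mem_unitaryGroup_iff'.mp hM.eigenvectorUnitary.2
  have key : c • (1 : Matrix n n ℝ) + a • M =
      (hM.eigenvectorUnitary : Matrix n n ℝ) *
        (diagonal fun i => c + a * hM.eigenvalues i) *
        (star hM.eigenvectorUnitary : Matrix n n ℝ) := by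
    have hdiag : (diagonal fun i => c + a * hM.eigenvalues i)
        = c • (1 : Matrix n n ℝ) + a • diagonal (RCLike.ofReal ∘ hM.eigenvalues) := by
      ext i j
      rcases eq_or_ne i j with rfl | h
      · simp [Matrix.diagonal_apply_eq, Matrix.one_apply_eq]
      · simp [Matrix.diagonal_apply_ne _ h, Matrix.one_apply_ne h]
    rw [hdiag, mul_add, add_mul, Matrix.mul_smul, Matrix.smul_mul, Matrix.mul_smul,
      Matrix.smul_mul, mul_one, hU]
    conv_lhs => rw [hM.spectral_theorem]
    rfl
  rw [key, det_mul, det_mul, mul_comm, ← mul_assoc, ← det_mul, hU', det_one, one_mul,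
    det_diagonal]

lemma eig_le_of_posSemidef (M : Matrix n n ℝ) (hM : M.IsHermitian) (c : ℝ)
    (h : (c • (1 : Matrix n n ℝ) - M).PosSemidef) (i : n) : hM.eigenvalues i ≤ c := by
  have h1 := h.re_dotProduct_nonneg ⇑(hM.eigenvectorBasis i)
  have h2 := hM.eigenvalues_eq i
  have hnorm : (dotProduct (star ⇑(hM.eigenvectorBasis i)) ⇑(hM.eigenvectorBasis i)) = 1 := by
    have := hM.eigenvectorBasis.orthonormal.1 i
    have h3 : (inner ℝ (hM.eigenvectorBasis i) (hM.eigenvectorBasis i) : ℝ) = 1 := by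
      rw [real_inner_self_eq_norm_sq, this]; norm_num
    rw [EuclideanSpace.inner_eq_star_dotProduct] at h3
    simpa using h3
  rw [sub_mulVec, dotProduct_sub, smul_mulVec, one_mulVec, dotProduct_smul, hnorm] at h1
  simp only [RCLike.star_def, map_sub] at h1
  simp only [smul_eq_mul, mul_one] at h1
  rw [h2]
  have : RCLike.re (dotProduct (star ⇑(hM.eigenvectorBasis i)) (M *ᵥ ⇑(hM.eigenvectorBasis i)))
      = dotProduct (star ⇑(hM.eigenvectorBasis i)) (M *ᵥ ⇑(hM.eigenvectorBasis i)) := rfl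
  rw [this]
  have h1' : (0:ℝ) ≤ c - dotProduct (star ⇑(hM.eigenvectorBasis i)) (M *ᵥ ⇑(hM.eigenvectorBasis i)) := by
    simpa using h1
  linarith

lemma card_zero_eig (M : Matrix n n ℝ) (hM : M.IsHermitian) :
    Fintype.card {i // hM.eigenvalues i = 0} + M.rank = Fintype.card n := by
  rw [hM.rank_eq_card_non_zero_eigs]
  classical
  rw [Fintype.card_subtype, Fintype.card_subtype]
  have := Finset.card_filter_add_card_filter_not
    (s := (Finset.univ : Finset n)) (p := fun i => hM.eigenvalues i = 0)
  simpa using this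


/-- degree as Nat.card -/
noncomputable def d {V : Type} (G : SimpleGraph V) (v : V) : ℕ := Nat.card (G.neighborSet v)

variable {V : Type} [Fintype V] [DecidableEq V] (G : SimpleGraph V)

lemma d_eq_degree [DecidableRel G.Adj] (v : V) : d G v = G.degree v := by
  rw [d, Nat.card_eq_fintype_card, SimpleGraph.card_neighborSet_eq_degree]

lemma d_pos (hG : G.Connected) (hV : 2 ≤ Fintype.card V) (v : V) : 0 < d G v := by
  classical
  rw [d_eq_degree, SimpleGraph.degree_pos_iff_exists_adj]
  obtain ⟨w, hw⟩ := Fintype.exists_ne_of_one_lt_card hV v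
  obtain ⟨p⟩ := hG.preconnected v w
  cases p with
  | nil => exact absurd rfl hw
  | cons h q => exact ⟨_, h⟩

lemma handshake : ∑ v, d G v = 2 * Nat.card G.edgeSet := by
  classical
  have := SimpleGraph.sum_degrees_eq_twice_card_edges G
  rw [Nat.card_eq_fintype_card, ← SimpleGraph.edgeFinset_card]
  rw [← this]
  exact Finset.sum_congr rfl fun v _ => d_eq_degree G v

/-- the number of edges incident to a vertex -/
lemma card_incidence (v : V) :
    Nat.card {e : G.edgeSet // v ∈ (e : Sym2 V)} = d G v := by
  classical
  have e1 : {e : G.edgeSet // v ∈ (e : Sym2 V)} ≃ G.incidenceSet v := by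
    refine ⟨fun x => ⟨x.1.1, x.1.2, x.2⟩, fun x => ⟨⟨x.1, x.2.1⟩, x.2.2⟩, fun x => rfl, fun x => rfl⟩
  rw [Nat.card_congr e1, Nat.card_congr (G.incidenceSetEquivNeighborSet v), d]

section Subdiv
variable {V : Type} [Fintype V] [DecidableEq V] (G : SimpleGraph V)

lemma subdiv_adj_inl_inr (v : V) (e : G.edgeSet) :
    (subdivision G).Adj (Sum.inl v) (Sum.inr e) ↔ v ∈ (e : Sym2 V) := Iff.rfl

lemma subdiv_adj_inl_inl (v w : V) : ¬ (subdivision G).Adj (Sum.inl v) (Sum.inl w) := fun h => h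

lemma subdiv_adj_inr_inr (e f : G.edgeSet) :
    ¬ (subdivision G).Adj (Sum.inr e) (Sum.inr f) := fun h => h

lemma edge_out_ne (e : G.edgeSet) :
    ((e : Sym2 V)).out.1 ≠ ((e : Sym2 V)).out.2 := by
  intro h
  have hd : ((e : Sym2 V)).IsDiag := by
    rw [← (e : Sym2 V).out_eq]
    exact Sym2.mk_isDiag_iff.mpr h
  exact (SimpleGraph.not_isDiag_of_mem_edgeSet G e.2) hd

lemma adj_out (e : G.edgeSet) : G.Adj ((e : Sym2 V)).out.1 ((e : Sym2 V)).out.2 := by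
  rw [← SimpleGraph.mem_edgeSet, Sym2.mk, (e : Sym2 V).out_eq]
  exact e.2

lemma mem_edge_iff (e : G.edgeSet) (v : V) :
    v ∈ (e : Sym2 V) ↔ v = ((e : Sym2 V)).out.1 ∨ v = ((e : Sym2 V)).out.2 := by
  conv_lhs => rw [← (e : Sym2 V).out_eq]
  exact Sym2.mem_iff

lemma subdiv_d_inl (v : V) : d (subdivision G) (Sum.inl v) = d G v := by
  rw [← card_incidence G v]
  apply Nat.card_congr
  refine ⟨fun x => ?_, fun x => ⟨Sum.inr x.1, x.2⟩, ?_, ?_⟩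
  · rcases x with ⟨w | e, hx⟩
    · exact absurd hx (subdiv_adj_inl_inl G v w)
    · exact ⟨e, hx⟩
  · rintro ⟨w | e, hx⟩
    · exact absurd hx (subdiv_adj_inl_inl G v w)
    · rfl
  · rintro ⟨e, he⟩; rfl

lemma subdiv_d_inr (e : G.edgeSet) : d (subdivision G) (Sum.inr e) = 2 := by
  have h1 : (subdivision G).neighborSet (Sum.inr e) = Sum.inl '' {v : V | v ∈ (e : Sym2 V)} := by
    ext w
    rcases w with v | f
    · simp only [SimpleGraph.mem_neighborSet, Set.mem_image]
      constructor
      · intro h; exact ⟨v, h, rfl⟩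
      · rintro ⟨u, hu, huv⟩; cases huv; exact hu
    · simp only [SimpleGraph.mem_neighborSet, Set.mem_image]
      constructor
      · intro h; exact absurd h (subdiv_adj_inr_inr G e f)
      · rintro ⟨u, hu, huv⟩; cases huv
  have h2 : {v : V | v ∈ (e : Sym2 V)} = {((e : Sym2 V)).out.1, ((e : Sym2 V)).out.2} := by
    ext v; simpa using mem_edge_iff G e v
  rw [d, h1, Nat.card_coe_set_eq, Set.ncard_image_of_injective _ Sum.inl_injective, h2,
    Set.ncard_pair (edge_out_ne G e)]

lemma subdiv_card_edge :
    Nat.card (subdivision G).edgeSet = 2 * Nat.card G.edgeSet := by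
  classical
  haveI : Fintype ↥G.edgeSet := Fintype.ofFinite _
  have h1 := handshake (subdivision G)
  have h2 : ∑ w : V ⊕ G.edgeSet, d (subdivision G) w
      = ∑ v : V, d G v + ∑ e : G.edgeSet, 2 := by
    rw [Fintype.sum_sum_type]
    congr 1
    · exact Finset.sum_congr rfl fun v _ => subdiv_d_inl G v
    · exact Finset.sum_congr rfl fun e _ => subdiv_d_inr G e
  rw [h2, handshake G] at h1
  simp only [Finset.sum_const, Finset.card_univ, smul_eq_mul, mul_comm] at h1
  have h3 : Fintype.card ↥G.edgeSet = Nat.card G.edgeSet := (Nat.card_eq_fintype_card).symm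
  omega

lemma subdiv_connected (hG : G.Connected) : (subdivision G).Connected := by
  have hne : Nonempty V := hG.nonempty
  have hpre : (subdivision G).Preconnected := by
    intro x y
    have key : ∀ v w : V, (subdivision G).Reachable (Sum.inl v) (Sum.inl w) := by
      intro v w
      obtain ⟨p⟩ := hG.preconnected v w
      induction p with
      | nil => exact SimpleGraph.Reachable.refl _
      | @cons a b c hab p ih =>
        refine SimpleGraph.Reachable.trans ?_ ih
        have he : s(a, b) ∈ G.edgeSet := hab
        have h1 : (subdivision G).Adj (Sum.inl a) (Sum.inr ⟨s(a,b), he⟩) := Sym2.mem_mk_left a b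
        have h2 : (subdivision G).Adj (Sum.inr ⟨s(a,b), he⟩) (Sum.inl b) := Sym2.mem_mk_right a b
        exact (h1.reachable).trans h2.reachable
    have key2 : ∀ x : V ⊕ G.edgeSet, ∃ v : V, (subdivision G).Reachable x (Sum.inl v) := by
      rintro (v | e)
      · exact ⟨v, SimpleGraph.Reachable.refl _⟩
      · refine ⟨((e : Sym2 V)).out.1, ?_⟩
        have : (subdivision G).Adj (Sum.inr e) (Sum.inl ((e : Sym2 V)).out.1) :=
          Sym2.out_fst_mem _
        exact this.reachable
    obtain ⟨v, hv⟩ := key2 x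
    obtain ⟨w, hw⟩ := key2 y
    exact hv.trans ((key v w).trans hw.symm)
  haveI : Nonempty (V ⊕ G.edgeSet) := ⟨Sum.inl (Classical.arbitrary V)⟩
  exact ⟨hpre⟩

end Subdiv
section Inc
variable {V : Type} [Fintype V] [DecidableEq V] (G : SimpleGraph V)

/-- unsigned normalized incidence matrix -/
noncomputable def inc : Matrix V G.edgeSet ℝ :=
  Matrix.of fun v e => if v ∈ (e : Sym2 V) then 1 / Real.sqrt (2 * d G v) else 0

/-- sign of a vertex in an edge -/
noncomputable def sgn : V → G.edgeSet → ℝ :=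
  fun v e => if v = ((e : Sym2 V)).out.1 then 1 else -1

/-- signed normalized incidence matrix -/
noncomputable def incS : Matrix V G.edgeSet ℝ :=
  Matrix.of fun v e => sgn G v e * inc G v e

lemma sgn_mul_self (v : V) (e : G.edgeSet) : sgn G v e * sgn G v e = 1 := by
  unfold sgn; split <;> norm_num

lemma sgn_mul_sgn (u v : V) (e : G.edgeSet) (huv : u ≠ v)
    (hu : u ∈ (e : Sym2 V)) (hv : v ∈ (e : Sym2 V)) :
    sgn G u e * sgn G v e = -1 := by
  have hne := edge_out_ne G e
  rw [mem_edge_iff] at hu hv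
  unfold sgn
  rcases hu with rfl | rfl <;> rcases hv with rfl | rfl
  · exact absurd rfl huv
  · rw [if_pos rfl, if_neg (Ne.symm hne)]; ring
  · rw [if_neg (Ne.symm hne), if_pos rfl]; ring
  · exact absurd rfl huv

lemma sq_inc_term (v : V) :
    (1 / Real.sqrt (2 * d G v)) * (1 / Real.sqrt (2 * d G v)) = 1 / (2 * d G v) := by
  rw [div_mul_div_comm, one_mul, Real.mul_self_sqrt (by positivity)]

lemma normLap_eq : normLap G = 1 - normAdj G := by
  unfold normLap
  congr 1
  have h : (Classical.typeDecidableEq V) = ‹DecidableEq V› := Subsingleton.elim _ _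
  rw [← h]
  congr

open Classical in
lemma normAdj_eq (u v : V) :
    normAdj G u v = if G.Adj u v then 1 / Real.sqrt ((d G u : ℝ) * (d G v : ℝ)) else 0 := rfl

variable [Fintype ↥G.edgeSet]

lemma sum_inc_diag (u : V) (f : G.edgeSet → ℝ) (c : ℝ)
    (hf : ∀ e : G.edgeSet, f e = if u ∈ (e : Sym2 V) then c else 0) :
    ∑ e : G.edgeSet, f e = (d G u : ℝ) * c := by
  classical
  rw [Finset.sum_congr rfl fun e _ => hf e, Finset.sum_ite, Finset.sum_const, Finset.sum_const,
    smul_zero, add_zero, nsmul_eq_mul]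
  have hc : (Finset.filter (fun x : G.edgeSet => u ∈ (x : Sym2 V)) Finset.univ).card = d G u := by
    rw [← card_incidence G u, Nat.card_eq_fintype_card, Fintype.card_subtype]
  rw [hc]

lemma sum_inc_offdiag_nonadj (u v : V) (huv : u ≠ v) (hadj : ¬ G.Adj u v)
    (f : G.edgeSet → ℝ)
    (hf : ∀ e : G.edgeSet, ¬(u ∈ (e : Sym2 V) ∧ v ∈ (e : Sym2 V)) → f e = 0) :
    ∑ e : G.edgeSet, f e = 0 := by
  apply Finset.sum_eq_zero
  intro e _
  apply hf
  rintro ⟨hu, hv⟩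
  have : (e : Sym2 V) = s(u, v) := (Sym2.mem_and_mem_iff huv).mp ⟨hu, hv⟩
  exact hadj (by rw [← SimpleGraph.mem_edgeSet, ← this]; exact e.2)

lemma sum_inc_offdiag_adj (u v : V) (huv : u ≠ v) (hadj : G.Adj u v)
    (f : G.edgeSet → ℝ)
    (hf : ∀ e : G.edgeSet, ¬(u ∈ (e : Sym2 V) ∧ v ∈ (e : Sym2 V)) → f e = 0) :
    ∑ e : G.edgeSet, f e = f ⟨s(u, v), hadj⟩ := by
  apply Finset.sum_eq_single_of_mem (⟨s(u, v), hadj⟩ : G.edgeSet) (Finset.mem_univ _)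
  intro e _ hne
  apply hf
  rintro ⟨hu, hv⟩
  have : (e : Sym2 V) = s(u, v) := (Sym2.mem_and_mem_iff huv).mp ⟨hu, hv⟩
  exact hne (Subtype.ext this)

lemma sqrt_two_d (v : V) : Real.sqrt (2 * d G v) = Real.sqrt 2 * Real.sqrt (d G v) := by
  rw [Real.sqrt_mul (by norm_num)]

lemma inc_pair (u v : V) (hu : 0 < d G u) (hv : 0 < d G v) :
    (1 / Real.sqrt (2 * d G u)) * (1 / Real.sqrt (2 * d G v))
      = (1 / Real.sqrt ((d G u : ℝ) * (d G v : ℝ))) / 2 := by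
  rw [sqrt_two_d, sqrt_two_d, Real.sqrt_mul (by positivity)]
  have h2 : Real.sqrt 2 * Real.sqrt 2 = 2 := Real.mul_self_sqrt (by norm_num)
  have hu' : Real.sqrt (d G u) ≠ 0 := by
    apply Real.sqrt_ne_zero'.mpr; exact_mod_cast hu
  have hv' : Real.sqrt (d G v) ≠ 0 := by
    apply Real.sqrt_ne_zero'.mpr; exact_mod_cast hv
  have h2' : Real.sqrt 2 ≠ 0 := by positivity
  rw [div_mul_div_comm, one_mul, div_div]
  congr 1
  calc (Real.sqrt 2 * Real.sqrt (d G u)) * (Real.sqrt 2 * Real.sqrt (d G v))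
      = (Real.sqrt 2 * Real.sqrt 2) * (Real.sqrt (d G u) * Real.sqrt (d G v)) := by ring
    _ = 2 * (Real.sqrt (d G u) * Real.sqrt (d G v)) := by rw [h2]
    _ = Real.sqrt (d G u) * Real.sqrt (d G v) * 2 := by ring

lemma inc_mul_transpose_apply (hG : G.Connected) (hV : 2 ≤ Fintype.card V) (u v : V) :
    (inc G * (inc G)ᵀ) u v = if u = v then 1/2 else normAdj G u v / 2 := by
  classical
  rw [Matrix.mul_apply]
  simp only [Matrix.transpose_apply]
  rcases eq_or_ne u v with rfl | huv
  · rw [if_pos rfl]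
    rw [sum_inc_diag G u _ (1 / (2 * d G u)) ?_]
    · have := d_pos G hG hV u
      have hd : (0:ℝ) < (d G u : ℝ) := by exact_mod_cast this
      field_simp
    · intro e
      unfold inc
      simp only [Matrix.of_apply]
      split
      · exact sq_inc_term G u
      · ring
  · rw [if_neg huv]
    by_cases hadj : G.Adj u v
    · rw [sum_inc_offdiag_adj G u v huv hadj _ ?_]
      · unfold inc
        simp only [Matrix.of_apply]
        rw [if_pos (Sym2.mem_mk_left u v), if_pos (Sym2.mem_mk_right u v)]
        rw [inc_pair G u v (d_pos G hG hV u) (d_pos G hG hV v), normAdj_eq, if_pos hadj]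
      · intro e he
        unfold inc
        simp only [Matrix.of_apply]
        rcases Decidable.not_and_iff_or_not.mp he with h | h
        · rw [if_neg h]; ring
        · rw [if_neg h]; ring
    · rw [sum_inc_offdiag_nonadj G u v huv hadj _ ?_, normAdj_eq, if_neg hadj]
      · ring
      · intro e he
        unfold inc
        simp only [Matrix.of_apply]
        rcases Decidable.not_and_iff_or_not.mp he with h | h
        · rw [if_neg h]; ring
        · rw [if_neg h]; ring

lemma incS_mul_transpose_apply (hG : G.Connected) (hV : 2 ≤ Fintype.card V) (u v : V) :
    (incS G * (incS G)ᵀ) u v = if u = v then 1/2 else -(normAdj G u v) / 2 := by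
  classical
  rw [Matrix.mul_apply]
  simp only [Matrix.transpose_apply]
  rcases eq_or_ne u v with rfl | huv
  · rw [if_pos rfl]
    rw [sum_inc_diag G u _ (1 / (2 * d G u)) ?_]
    · have := d_pos G hG hV u
      have hd : (0:ℝ) < (d G u : ℝ) := by exact_mod_cast this
      field_simp
    · intro e
      unfold incS inc
      simp only [Matrix.of_apply]
      split
      · rw [show sgn G u e * (1 / Real.sqrt (2 * ↑(d G u))) * (sgn G u e * (1 / Real.sqrt (2 * ↑(d G u))))
          = (sgn G u e * sgn G u e) * ((1 / Real.sqrt (2 * ↑(d G u))) * (1 / Real.sqrt (2 * ↑(d G u)))) by ring,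
          sgn_mul_self, one_mul]
        exact sq_inc_term G u
      · ring
  · rw [if_neg huv]
    by_cases hadj : G.Adj u v
    · rw [sum_inc_offdiag_adj G u v huv hadj _ ?_]
      · unfold incS inc
        simp only [Matrix.of_apply]
        rw [if_pos (Sym2.mem_mk_left u v), if_pos (Sym2.mem_mk_right u v)]
        rw [show sgn G u ⟨s(u,v), hadj⟩ * (1 / Real.sqrt (2 * ↑(d G u))) *
            (sgn G v ⟨s(u,v), hadj⟩ * (1 / Real.sqrt (2 * ↑(d G v))))
          = (sgn G u ⟨s(u,v), hadj⟩ * sgn G v ⟨s(u,v), hadj⟩) *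
            ((1 / Real.sqrt (2 * ↑(d G u))) * (1 / Real.sqrt (2 * ↑(d G v)))) by ring]
        rw [sgn_mul_sgn G u v _ huv (Sym2.mem_mk_left u v) (Sym2.mem_mk_right u v)]
        rw [inc_pair G u v (d_pos G hG hV u) (d_pos G hG hV v), normAdj_eq, if_pos hadj]
        ring
      · intro e he
        unfold incS inc
        simp only [Matrix.of_apply]
        rcases Decidable.not_and_iff_or_not.mp he with h | h
        · rw [if_neg h]; ring
        · rw [if_neg h]; ring
    · rw [sum_inc_offdiag_nonadj G u v huv hadj _ ?_, normAdj_eq, if_neg hadj]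
      · ring
      · intro e he
        unfold incS inc
        simp only [Matrix.of_apply]
        rcases Decidable.not_and_iff_or_not.mp he with h | h
        · rw [if_neg h]; ring
        · rw [if_neg h]; ring

lemma two_smul_inc (hG : G.Connected) (hV : 2 ≤ Fintype.card V) :
    (2 : ℝ) • (inc G * (inc G)ᵀ) = 1 + normAdj G := by
  ext u v
  rw [Matrix.smul_apply, inc_mul_transpose_apply G hG hV, Matrix.add_apply, smul_eq_mul]
  rcases eq_or_ne u v with rfl | huv
  · rw [if_pos rfl, Matrix.one_apply_eq, normAdj_eq, if_neg (G.irrefl)]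
    norm_num
  · rw [if_neg huv, Matrix.one_apply_ne huv]
    ring

lemma two_smul_incS (hG : G.Connected) (hV : 2 ≤ Fintype.card V) :
    (2 : ℝ) • (incS G * (incS G)ᵀ) = normLap G := by
  ext u v
  rw [Matrix.smul_apply, incS_mul_transpose_apply G hG hV, smul_eq_mul, normLap_eq,
    Matrix.sub_apply]
  rcases eq_or_ne u v with rfl | huv
  · rw [if_pos rfl, Matrix.one_apply_eq, normAdj_eq, if_neg (G.irrefl)]
    norm_num
  · rw [if_neg huv, Matrix.one_apply_ne huv]
    ring

lemma posSemidef_two_smul_self_mul_transpose (A : Matrix V G.edgeSet ℝ) :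
    ((2 : ℝ) • (A * Aᵀ)).PosSemidef := by
  have h1 : Aᵀ = Aᴴ := by
    ext i j; simp [Matrix.conjTranspose_apply, Matrix.transpose_apply]
  rw [h1]
  have h2 := Matrix.posSemidef_self_mul_conjTranspose A
  constructor
  · show ((2:ℝ) • (A * Aᴴ))ᴴ = _
    rw [Matrix.conjTranspose_smul, h2.1]
    norm_num
  · intro x
    exact (h2.smul (by norm_num : (0:ℝ) ≤ 2)).2 x

lemma posSemidef_normLap (hG : G.Connected) (hV : 2 ≤ Fintype.card V) :
    (normLap G).PosSemidef := by
  rw [← two_smul_incS G hG hV]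
  exact posSemidef_two_smul_self_mul_transpose G (incS G)

lemma posSemidef_two_sub_normLap (hG : G.Connected) (hV : 2 ≤ Fintype.card V) :
    ((2:ℝ) • (1 : Matrix V V ℝ) - normLap G).PosSemidef := by
  have h : (2:ℝ) • (1 : Matrix V V ℝ) - normLap G = 1 + normAdj G := by
    rw [normLap_eq]
    module
  rw [h, ← two_smul_inc G hG hV]
  exact posSemidef_two_smul_self_mul_transpose G (inc G)

end Inc
section Ker
variable {V : Type} [Fintype V] [DecidableEq V] (G : SimpleGraph V)

noncomputable def sqrtDeg : V → ℝ := fun v => Real.sqrt (d G v)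

lemma d_pos_of_adj {u v : V} (h : G.Adj u v) : 0 < d G u := by
  have : Nonempty (G.neighborSet u) := ⟨⟨v, h⟩⟩
  exact Nat.card_pos

open Classical in
lemma filter_adj_card (v : V) :
    (Finset.univ.filter (fun u => G.Adj v u)).card = d G v := by
  classical
  rw [← Fintype.card_subtype, d, Nat.card_eq_fintype_card]
  apply Fintype.card_congr
  exact Equiv.subtypeEquivRight (by intro u; simp)

lemma normAdj_mulVec_sqrtDeg (hG : G.Connected) (hV : 2 ≤ Fintype.card V) :
    normAdj G *ᵥ sqrtDeg G = sqrtDeg G := by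
  classical
  funext v
  have hdv : 0 < d G v := d_pos G hG hV v
  have hsv : Real.sqrt (d G v) ≠ 0 := by
    apply Real.sqrt_ne_zero'.mpr; exact_mod_cast hdv
  rw [Matrix.mulVec]
  show (fun u => normAdj G v u) ⬝ᵥ sqrtDeg G = sqrtDeg G v
  rw [dotProduct]
  have hterm : ∀ u : V, normAdj G v u * sqrtDeg G u
      = if G.Adj v u then 1 / Real.sqrt (d G v) else 0 := by
    intro u
    rw [normAdj_eq]
    by_cases h : G.Adj v u
    · rw [if_pos h, if_pos h]
      have hdu : 0 < d G u := d_pos_of_adj G h.symm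
      have hsu : Real.sqrt (d G u) ≠ 0 := by
        apply Real.sqrt_ne_zero'.mpr; exact_mod_cast hdu
      rw [Real.sqrt_mul (by positivity)]
      unfold sqrtDeg
      field_simp
    · rw [if_neg h, if_neg h, zero_mul]
  rw [Finset.sum_congr rfl fun u _ => hterm u, Finset.sum_ite, Finset.sum_const,
    Finset.sum_const, smul_zero, add_zero, nsmul_eq_mul]
  have hc := filter_adj_card G v
  rw [hc]
  unfold sqrtDeg
  rw [show ((d G v : ℝ)) = Real.sqrt (d G v) * Real.sqrt (d G v) from
    (Real.mul_self_sqrt (by positivity)).symm]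
  field_simp
  rw [Real.sqrt_sq (Real.sqrt_nonneg _)]

lemma normLap_mulVec_sqrtDeg (hG : G.Connected) (hV : 2 ≤ Fintype.card V) :
    normLap G *ᵥ sqrtDeg G = 0 := by
  rw [normLap_eq, Matrix.sub_mulVec, Matrix.one_mulVec, normAdj_mulVec_sqrtDeg G hG hV, sub_self]

lemma sqrtDeg_ne_zero (hG : G.Connected) (hV : 2 ≤ Fintype.card V) : sqrtDeg G ≠ 0 := by
  have hne : Nonempty V := hG.nonempty
  intro h
  have v0 := Classical.arbitrary V
  have := congrFun h v0
  have hd : 0 < d G v0 := d_pos G hG hV v0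
  have : Real.sqrt (d G v0) = 0 := this
  rw [Real.sqrt_eq_zero (by positivity)] at this
  have : (d G v0 : ℝ) ≠ 0 := by exact_mod_cast hd.ne'
  simp_all

lemma reachable_const {q : V → ℝ} (hrel : ∀ u v : V, G.Adj u v → q u = q v)
    {u v : V} (h : G.Reachable u v) : q u = q v := by
  obtain ⟨p⟩ := h
  induction p with
  | nil => rfl
  | cons h p ih => exact (hrel _ _ h).trans ih

variable [Fintype ↥G.edgeSet]

lemma incS_transpose_mulVec_apply (x : V → ℝ) (e : G.edgeSet) :
    ((incS G)ᵀ *ᵥ x) e =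
      x ((e : Sym2 V)).out.1 / Real.sqrt (2 * d G ((e : Sym2 V)).out.1)
      - x ((e : Sym2 V)).out.2 / Real.sqrt (2 * d G ((e : Sym2 V)).out.2) := by
  classical
  set a := ((e : Sym2 V)).out.1
  set b := ((e : Sym2 V)).out.2
  have hab : a ≠ b := edge_out_ne G e
  rw [Matrix.mulVec]
  show (fun v => (incS G)ᵀ e v) ⬝ᵥ x = _
  rw [dotProduct]
  have hzero : ∀ v ∈ Finset.univ, v ∉ ({a, b} : Finset V) →
      (incS G)ᵀ e v * x v = 0 := by
    intro v _ hv
    simp only [Finset.mem_insert, Finset.mem_singleton] at hv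
    push_neg at hv
    have hvm : v ∉ (e : Sym2 V) := by
      rw [mem_edge_iff]
      push_neg
      exact hv
    simp only [Matrix.transpose_apply, incS, inc, Matrix.of_apply]
    rw [if_neg hvm]
    ring
  rw [← Finset.sum_subset (Finset.subset_univ ({a, b} : Finset V)) hzero,
    Finset.sum_pair hab]
  have ha : a ∈ (e : Sym2 V) := Sym2.out_fst_mem _
  have hb : b ∈ (e : Sym2 V) := Sym2.out_snd_mem _
  simp only [Matrix.transpose_apply, incS, inc, sgn, Matrix.of_apply, if_pos ha, if_pos hb,
    if_neg hab.symm, eq_self_iff_true, if_true]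
  rw [if_pos rfl, if_neg (show ¬ b = ((e : Sym2 V)).out.1 from hab.symm)]
  ring

lemma ker_rel (hG : G.Connected) (hV : 2 ≤ Fintype.card V) (x : V → ℝ)
    (hx : normLap G *ᵥ x = 0) (u v : V) (h : G.Adj u v) :
    x u / Real.sqrt (2 * d G u) = x v / Real.sqrt (2 * d G v) := by
  classical
  have h0 : (incS G * (incS G)ᵀ) *ᵥ x = 0 := by
    have h1 : (2:ℝ) • ((incS G * (incS G)ᵀ) *ᵥ x) = 0 := by
      rw [← Matrix.smul_mulVec, two_smul_incS G hG hV, hx]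
    have := smul_eq_zero.mp h1
    simpa using this
  have h2 : ((incS G)ᵀ *ᵥ x) ⬝ᵥ ((incS G)ᵀ *ᵥ x) = 0 := by
    have h2' : x ⬝ᵥ ((incS G * (incS G)ᵀ) *ᵥ x) = 0 := by rw [h0, dotProduct_zero]
    rw [← Matrix.mulVec_mulVec, Matrix.dotProduct_mulVec, ← Matrix.mulVec_transpose] at h2'
    exact h2'
  have h3 : ∀ e : G.edgeSet, ((incS G)ᵀ *ᵥ x) e = 0 := by
    intro e
    have hnn : ∀ e ∈ Finset.univ, (0:ℝ) ≤ ((incS G)ᵀ *ᵥ x) e * ((incS G)ᵀ *ᵥ x) e :=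
      fun e _ => mul_self_nonneg _
    have := (Finset.sum_eq_zero_iff_of_nonneg hnn).mp h2 e (Finset.mem_univ e)
    exact mul_self_eq_zero.mp this
  have h4 := h3 ⟨s(u, v), h⟩
  rw [incS_transpose_mulVec_apply] at h4
  have hout : ((⟨s(u,v), h⟩ : G.edgeSet) : Sym2 V).out = (u, v) ∨
      ((⟨s(u,v), h⟩ : G.edgeSet) : Sym2 V).out = (v, u) := by
    have := ((⟨s(u,v), h⟩ : G.edgeSet) : Sym2 V).out_eq
    have h5 : s(((⟨s(u,v), h⟩ : G.edgeSet) : Sym2 V).out.1,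
        ((⟨s(u,v), h⟩ : G.edgeSet) : Sym2 V).out.2) = s(u, v) := this
    rw [Sym2.eq_iff] at h5
    rcases h5 with ⟨h5, h6⟩ | ⟨h5, h6⟩
    · left; exact Prod.ext h5 h6
    · right; exact Prod.ext h5 h6
  rcases hout with hout | hout <;> rw [hout] at h4
  · linarith
  · simp only at h4
    linarith

lemma ker_normLap (hG : G.Connected) (hV : 2 ≤ Fintype.card V) :
    LinearMap.ker (Matrix.mulVecLin (normLap G)) = Submodule.span ℝ {sqrtDeg G} := by
  apply le_antisymm
  · intro x hx
    rw [LinearMap.mem_ker, Matrix.mulVecLin_apply] at hx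
    have hne : Nonempty V := hG.nonempty
    set v0 := Classical.arbitrary V
    set c := x v0 / Real.sqrt (2 * d G v0) with hc
    have hconst : ∀ v : V, x v / Real.sqrt (2 * d G v) = c := by
      intro v
      exact (reachable_const G (fun a b hab => ker_rel G hG hV x hx a b hab)
        (hG.preconnected v v0))
    rw [Submodule.mem_span_singleton]
    refine ⟨c * Real.sqrt 2, ?_⟩
    funext v
    have hdv : 0 < d G v := d_pos G hG hV v
    have hs : Real.sqrt (2 * d G v) ≠ 0 := by
      apply Real.sqrt_ne_zero'.mpr; positivity
    have := hconst v
    rw [div_eq_iff hs] at this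
    rw [Pi.smul_apply, smul_eq_mul]
    unfold sqrtDeg
    rw [this, sqrt_two_d]
    ring
  · rw [Submodule.span_singleton_le_iff_mem, LinearMap.mem_ker, Matrix.mulVecLin_apply]
    exact normLap_mulVec_sqrtDeg G hG hV

lemma rank_normLap (hG : G.Connected) (hV : 2 ≤ Fintype.card V) :
    (normLap G).rank + 1 = Fintype.card V := by
  have h1 := LinearMap.finrank_range_add_finrank_ker (Matrix.mulVecLin (normLap G))
  rw [ker_normLap G hG hV, finrank_span_singleton (sqrtDeg_ne_zero G hG hV)] at h1
  rw [Module.finrank_fintype_fun_eq_card] at h1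
  rw [Matrix.rank]
  exact h1

lemma card_zero_eig_normLap (hG : G.Connected) (hV : 2 ≤ Fintype.card V) :
    Fintype.card {i // (normLap_isHermitian G).eigenvalues i = 0} = 1 := by
  have h1 := card_zero_eig (normLap G) (normLap_isHermitian G)
  have h2 := rank_normLap G hG hV
  omega

end Ker
section Eig
variable {V : Type} [Fintype V] [DecidableEq V] (G : SimpleGraph V)
variable [Fintype ↥G.edgeSet] [DecidableEq ↥G.edgeSet]

lemma eig_nonneg (hG : G.Connected) (hV : 2 ≤ Fintype.card V) (i : V) :
    0 ≤ (normLap_isHermitian G).eigenvalues i :=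
  (posSemidef_normLap G hG hV).eigenvalues_nonneg i

lemma eig_le_two (hG : G.Connected) (hV : 2 ≤ Fintype.card V) (i : V) :
    (normLap_isHermitian G).eigenvalues i ≤ 2 := by
  have h := eig_le_of_posSemidef (normLap G) (normLap_isHermitian G) 2 ?_ i
  · exact h
  · exact posSemidef_two_sub_normLap G hG hV

lemma normAdj_subdiv :
    normAdj (subdivision G) = Matrix.fromBlocks 0 (inc G) (inc G)ᵀ 0 := by
  ext x y
  rcases x with v | e <;> rcases y with w | f
  · rw [normAdj_eq, if_neg (subdiv_adj_inl_inl G v w), Matrix.fromBlocks_apply₁₁]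
    rfl
  · rw [normAdj_eq, Matrix.fromBlocks_apply₁₂]
    by_cases h : v ∈ (f : Sym2 V)
    · have hadj : (subdivision G).Adj (Sum.inl v) (Sum.inr f) := h
      rw [if_pos hadj]
      show _ = inc G v f
      unfold inc
      rw [Matrix.of_apply, if_pos h, subdiv_d_inl, subdiv_d_inr]
      rw [show ((2:ℕ):ℝ) = (2:ℝ) by norm_num]
      rw [mul_comm]
    · have hadj : ¬ (subdivision G).Adj (Sum.inl v) (Sum.inr f) := h
      rw [if_neg hadj]
      show _ = inc G v f
      unfold inc
      rw [Matrix.of_apply, if_neg h]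
  · rw [normAdj_eq, Matrix.fromBlocks_apply₂₁]
    by_cases h : w ∈ (e : Sym2 V)
    · have hadj : (subdivision G).Adj (Sum.inr e) (Sum.inl w) := h
      rw [if_pos hadj]
      show _ = inc G w e
      unfold inc
      rw [Matrix.of_apply, if_pos h, subdiv_d_inl, subdiv_d_inr]
      rw [show ((2:ℕ):ℝ) = (2:ℝ) by norm_num]
    · have hadj : ¬ (subdivision G).Adj (Sum.inr e) (Sum.inl w) := h
      rw [if_neg hadj]
      show _ = inc G w e
      unfold inc
      rw [Matrix.of_apply, if_neg h]
  · rw [normAdj_eq, if_neg (subdiv_adj_inr_inr G e f), Matrix.fromBlocks_apply₂₂]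
    rfl

lemma inc_mul_transpose_eq (hG : G.Connected) (hV : 2 ≤ Fintype.card V) :
    inc G * (inc G)ᵀ = (1 : Matrix V V ℝ) - (1/2 : ℝ) • normLap G := by
  have h := two_smul_inc G hG hV
  have h2 : (2:ℝ) • (inc G * (inc G)ᵀ)
      = (2:ℝ) • ((1 : Matrix V V ℝ) - (1/2 : ℝ) • normLap G) := by
    rw [h, normLap_eq]
    module
  exact smul_right_injective _ (by norm_num : (2:ℝ) ≠ 0) h2

lemma det_identity (hG : G.Connected) (hV : 2 ≤ Fintype.card V) (x : ℝ) (hx : x ≠ 1) :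
    Matrix.det (x • (1 : Matrix (V ⊕ G.edgeSet) (V ⊕ G.edgeSet) ℝ) - normLap (subdivision G))
        * (x - 1) ^ (Fintype.card V)
      = (x - 1) ^ (Fintype.card ↥G.edgeSet) *
        ∏ v : V, (x^2 - 2*x + (normLap_isHermitian G).eigenvalues v / 2) := by
  have hx1 : x - 1 ≠ 0 := sub_ne_zero.mpr hx
  -- block decomposition
  have hblock : x • (1 : Matrix (V ⊕ G.edgeSet) (V ⊕ G.edgeSet) ℝ) - normLap (subdivision G)
      = Matrix.fromBlocks ((x-1) • 1) (inc G) (inc G)ᵀ ((x-1) • 1) := by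
    rw [normLap_eq, normAdj_subdiv]
    rw [show (Matrix.fromBlocks ((x-1) • 1) (inc G) (inc G)ᵀ ((x-1) • 1) :
        Matrix (V ⊕ G.edgeSet) (V ⊕ G.edgeSet) ℝ)
      = Matrix.fromBlocks ((x-1) • 1) 0 0 ((x-1) • 1) + Matrix.fromBlocks 0 (inc G) (inc G)ᵀ 0 by
        rw [Matrix.fromBlocks_add]; congr 1 <;> simp]
    have h1 : (Matrix.fromBlocks ((x-1) • 1) 0 0 ((x-1) • 1) :
        Matrix (V ⊕ G.edgeSet) (V ⊕ G.edgeSet) ℝ) = (x-1) • 1 := by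
      rw [← Matrix.fromBlocks_one, Matrix.fromBlocks_smul]  -- name guess
      congr 1 <;> simp
    rw [h1]
    module
  rw [hblock]
  -- invertibility of the lower-right block
  haveI hinv : Invertible ((x-1) • (1 : Matrix G.edgeSet G.edgeSet ℝ)) :=
    ⟨(x-1)⁻¹ • 1, by rw [Matrix.smul_mul, Matrix.mul_smul, one_mul, smul_smul,
        inv_mul_cancel₀ hx1, one_smul],
      by rw [Matrix.smul_mul, Matrix.mul_smul, one_mul, smul_smul,
        mul_inv_cancel₀ hx1, one_smul]⟩
  have hinvOf : ⅟((x-1) • (1 : Matrix G.edgeSet G.edgeSet ℝ)) = (x-1)⁻¹ • 1 :=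
    invOf_eq_right_inv (by rw [Matrix.smul_mul, Matrix.mul_smul, one_mul, smul_smul,
      mul_inv_cancel₀ hx1, one_smul])
  rw [Matrix.det_fromBlocks₂₂, hinvOf]
  have hdetD : Matrix.det ((x-1) • (1 : Matrix G.edgeSet G.edgeSet ℝ))
      = (x-1) ^ (Fintype.card ↥G.edgeSet) := by
    rw [Matrix.det_smul, Matrix.det_one, mul_one]
  rw [hdetD]
  have hBDC : inc G * ((x-1)⁻¹ • (1 : Matrix G.edgeSet G.edgeSet ℝ)) * (inc G)ᵀ
      = (x-1)⁻¹ • (inc G * (inc G)ᵀ) := by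
    rw [Matrix.mul_smul, Matrix.mul_one, Matrix.smul_mul]
  rw [hBDC]
  -- pull (x-1)^cV inside the determinant
  have hpull : Matrix.det ((x-1) • (1 : Matrix V V ℝ) - (x-1)⁻¹ • (inc G * (inc G)ᵀ))
        * (x-1) ^ (Fintype.card V)
      = Matrix.det (((x-1)*(x-1)) • (1 : Matrix V V ℝ) - inc G * (inc G)ᵀ) := by
    have hsm : (x-1) • ((x-1) • (1 : Matrix V V ℝ) - (x-1)⁻¹ • (inc G * (inc G)ᵀ))
        = ((x-1)*(x-1)) • (1 : Matrix V V ℝ) - inc G * (inc G)ᵀ := by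
      rw [smul_sub, smul_smul, smul_smul, mul_inv_cancel₀ hx1, one_smul]
    calc Matrix.det ((x-1) • (1 : Matrix V V ℝ) - (x-1)⁻¹ • (inc G * (inc G)ᵀ))
          * (x-1) ^ (Fintype.card V)
        = (x-1) ^ (Fintype.card V) *
          Matrix.det ((x-1) • (1 : Matrix V V ℝ) - (x-1)⁻¹ • (inc G * (inc G)ᵀ)) := by ring
      _ = Matrix.det ((x-1) • ((x-1) • (1 : Matrix V V ℝ) - (x-1)⁻¹ • (inc G * (inc G)ᵀ))) := by
          rw [Matrix.det_smul]
      _ = _ := by rw [hsm]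
  have hform : ((x-1)*(x-1)) • (1 : Matrix V V ℝ) - inc G * (inc G)ᵀ
      = (x^2 - 2*x) • (1 : Matrix V V ℝ) + (1/2 : ℝ) • normLap G := by
    rw [inc_mul_transpose_eq G hG hV]
    module
  rw [mul_assoc]
  congr 1
  rw [hpull, hform, det_smul_one_add_smul (normLap G) (normLap_isHermitian G) (x^2-2*x) (1/2)]
  apply Finset.prod_congr rfl
  intro v _
  ring

end Eig
open Polynomial in
lemma eval_multiset_XsubC (m : Multiset ℝ) (x : ℝ) :
    Polynomial.eval x ((m.map fun a => Polynomial.X - Polynomial.C a).prod)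
      = (m.map fun a => x - a).prod := by
  rw [Polynomial.eval_multiset_prod, Multiset.map_map]
  congr 1
  apply Multiset.map_congr rfl
  intro a _
  simp

section MS
variable {V : Type} [Fintype V] [DecidableEq V] (G : SimpleGraph V)
variable [Fintype ↥G.edgeSet] [DecidableEq ↥G.edgeSet]

lemma det_as_prod {n : Type} [Fintype n] [DecidableEq n] (M : Matrix n n ℝ)
    (hM : M.IsHermitian) (x : ℝ) :
    Matrix.det (x • (1 : Matrix n n ℝ) - M) = ∏ i, (x - hM.eigenvalues i) := by
  have h : x • (1 : Matrix n n ℝ) - M = x • 1 + (-1 : ℝ) • M := by module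
  rw [h, det_smul_one_add_smul M hM x (-1)]
  apply Finset.prod_congr rfl
  intro i _
  ring

lemma eig_multiset (hG : G.Connected) (hV : 2 ≤ Fintype.card V) :
    (Finset.univ.val.map (normLap_isHermitian (subdivision G)).eigenvalues)
      + Multiset.replicate (Fintype.card V) (1:ℝ)
    = Multiset.replicate (Fintype.card ↥G.edgeSet) (1:ℝ)
      + ((Finset.univ.val.map
            (fun v => 1 - Real.sqrt (1 - (normLap_isHermitian G).eigenvalues v / 2)))
        + (Finset.univ.val.map
            (fun v => 1 + Real.sqrt (1 - (normLap_isHermitian G).eigenvalues v / 2)))) := by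
  classical
  set μ := (normLap_isHermitian (subdivision G)).eigenvalues with hμ
  set lam := (normLap_isHermitian G).eigenvalues with hlam
  set s : V → ℝ := fun v => Real.sqrt (1 - lam v / 2) with hs
  set mL : Multiset ℝ := (Finset.univ.val.map μ) + Multiset.replicate (Fintype.card V) (1:ℝ)
    with hmL
  set mR : Multiset ℝ := Multiset.replicate (Fintype.card ↥G.edgeSet) (1:ℝ)
      + ((Finset.univ.val.map (fun v => 1 - s v)) + (Finset.univ.val.map (fun v => 1 + s v)))
    with hmR
  have hss : ∀ v : V, s v * s v = 1 - lam v / 2 := by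
    intro v
    apply Real.mul_self_sqrt
    have := eig_le_two G hG hV v
    rw [← hlam] at this
    linarith
  -- polynomial equality
  have hpoly : ((mL.map fun a => Polynomial.X - Polynomial.C a).prod)
      = ((mR.map fun a => Polynomial.X - Polynomial.C a).prod) := by
    apply Polynomial.eq_of_infinite_eval_eq
    apply Set.Infinite.mono (s := {x : ℝ | x ≠ 1})
    · intro x hx
      have hx1 : x ≠ 1 := hx
      simp only [Set.mem_setOf_eq]
      rw [eval_multiset_XsubC, eval_multiset_XsubC]
      rw [hmL, hmR]
      rw [Multiset.map_add, Multiset.prod_add, Multiset.map_add, Multiset.prod_add,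
        Multiset.map_add, Multiset.prod_add]
      rw [Multiset.map_replicate, Multiset.prod_replicate,
        Multiset.map_replicate, Multiset.prod_replicate]
      rw [Multiset.map_map, Multiset.map_map, Multiset.map_map]
      have e1 : ((Finset.univ.val.map fun w => x - μ w)).prod = ∏ w, (x - μ w) := rfl
      have e2 : ((Finset.univ.val.map fun v => x - (1 - s v))).prod = ∏ v, (x - (1 - s v)) := rfl
      have e3 : ((Finset.univ.val.map fun v => x - (1 + s v))).prod = ∏ v, (x - (1 + s v)) := rfl
      show ((Finset.univ.val.map fun w => x - μ w)).prod * (x - 1)^(Fintype.card V)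
        = (x-1)^(Fintype.card ↥G.edgeSet) *
          (((Finset.univ.val.map fun v => x - (1 - s v))).prod *
            ((Finset.univ.val.map fun v => x - (1 + s v))).prod)
      rw [e1, e2, e3]
      have hdet := det_identity G hG hV x hx1
      rw [← det_as_prod (normLap (subdivision G)) (normLap_isHermitian (subdivision G)) x]
      rw [hdet]
      congr 1
      rw [← Finset.prod_mul_distrib]
      apply Finset.prod_congr rfl
      intro v _
      have := hss v
      nlinarith [hss v]
    · have : ({x : ℝ | x ≠ 1}) = ({(1:ℝ)}ᶜ : Set ℝ) := by
        ext x; simp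
      rw [this]
      exact (Set.finite_singleton (1:ℝ)).infinite_compl
  -- extract roots
  have hL := Polynomial.roots_multiset_prod_X_sub_C mL
  have hR := Polynomial.roots_multiset_prod_X_sub_C mR
  rw [← hL, ← hR, hpoly]

end MS

noncomputable def g : ℝ → ℝ := fun t => if t = 0 then 0 else t⁻¹

lemma g_one : g 1 = 1 := by unfold g; norm_num

lemma g_pair (lam : ℝ) (h0 : 0 ≤ lam) (h2 : lam ≤ 2) :
    g (1 - Real.sqrt (1 - lam/2)) + g (1 + Real.sqrt (1 - lam/2))
      = 4 * g lam + (if lam = 0 then 1/2 else 0) := by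
  have hnn : (0:ℝ) ≤ 1 - lam/2 := by linarith
  set s := Real.sqrt (1 - lam/2) with hsdef
  have hs2 : s * s = 1 - lam/2 := Real.mul_self_sqrt hnn
  have hs0 : 0 ≤ s := Real.sqrt_nonneg _
  by_cases h : lam = 0
  · subst h
    rw [if_pos rfl]
    have : s = 1 := by rw [hsdef]; norm_num
    rw [this]
    unfold g
    norm_num
  · rw [if_neg h]
    have hlam : 0 < lam := lt_of_le_of_ne h0 (Ne.symm h)
    have hs1 : s < 1 := by nlinarith
    have h1s : (0:ℝ) < 1 - s := by linarith
    have h1s' : (0:ℝ) < 1 + s := by linarith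
    unfold g
    rw [if_neg h1s.ne', if_neg h1s'.ne', if_neg h]
    rw [add_zero]
    field_simp
    nlinarith [hs2]

section KSum
variable {V : Type} [Fintype V] [DecidableEq V] (G : SimpleGraph V)

lemma kemeny_eq : kemeny G = ∑ i : V, g ((normLap_isHermitian G).eigenvalues i) := by
  unfold kemeny
  have h1 : Fintype.ofFinite V = ‹Fintype V› := Subsingleton.elim _ _
  have h2 : Classical.decEq V = ‹DecidableEq V› := Subsingleton.elim _ _
  rw [h1, h2]
  apply Finset.sum_congr rfl
  intro i _
  unfold g
  by_cases h : (normLap_isHermitian G).eigenvalues i = 0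
  · rw [if_pos h]
  · rw [if_neg h]

variable [Fintype ↥G.edgeSet] [DecidableEq ↥G.edgeSet]

lemma sum_if_eigzero (hG : G.Connected) (hV : 2 ≤ Fintype.card V) :
    ∑ v : V, (if (normLap_isHermitian G).eigenvalues v = 0 then (1/2:ℝ) else 0) = 1/2 := by
  classical
  rw [Finset.sum_ite, Finset.sum_const, Finset.sum_const, smul_zero, add_zero, nsmul_eq_mul]
  have hc := card_zero_eig_normLap G hG hV
  rw [Fintype.card_subtype] at hc
  rw [hc]
  norm_num

lemma kemeny_subdiv (hG : G.Connected) (hV : 2 ≤ Fintype.card V) :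
    kemeny (subdivision G)
      = 4 * kemeny G + 1/2 + (Fintype.card ↥G.edgeSet : ℝ) - (Fintype.card V : ℝ) := by
  classical
  rw [kemeny_eq (subdivision G), kemeny_eq G]
  have hms := eig_multiset G hG hV
  have hsum := congrArg (fun m : Multiset ℝ => ((m.map g)).sum) hms
  simp only [Multiset.map_add, Multiset.sum_add, Multiset.map_replicate,
    Multiset.sum_replicate, Multiset.map_map] at hsum
  have e1 : ((Finset.univ.val.map
      (g ∘ (normLap_isHermitian (subdivision G)).eigenvalues))).sum
      = ∑ w : V ⊕ G.edgeSet, g ((normLap_isHermitian (subdivision G)).eigenvalues w) := rfl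
  have e2 : ((Finset.univ.val.map
      (g ∘ fun v => 1 - Real.sqrt (1 - (normLap_isHermitian G).eigenvalues v / 2)))).sum
      = ∑ v : V, g (1 - Real.sqrt (1 - (normLap_isHermitian G).eigenvalues v / 2)) := rfl
  have e3 : ((Finset.univ.val.map
      (g ∘ fun v => 1 + Real.sqrt (1 - (normLap_isHermitian G).eigenvalues v / 2)))).sum
      = ∑ v : V, g (1 + Real.sqrt (1 - (normLap_isHermitian G).eigenvalues v / 2)) := rfl
  rw [e1, e2, e3, g_one, nsmul_eq_mul, nsmul_eq_mul, mul_one, mul_one] at hsum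
  have hpair : ∑ v : V, g (1 - Real.sqrt (1 - (normLap_isHermitian G).eigenvalues v / 2))
      + ∑ v : V, g (1 + Real.sqrt (1 - (normLap_isHermitian G).eigenvalues v / 2))
      = 4 * (∑ v : V, g ((normLap_isHermitian G).eigenvalues v)) + 1/2 := by
    rw [← Finset.sum_add_distrib]
    have : ∀ v : V, g (1 - Real.sqrt (1 - (normLap_isHermitian G).eigenvalues v / 2))
        + g (1 + Real.sqrt (1 - (normLap_isHermitian G).eigenvalues v / 2))
        = 4 * g ((normLap_isHermitian G).eigenvalues v)
          + (if (normLap_isHermitian G).eigenvalues v = 0 then 1/2 else 0) := by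
      intro v
      exact g_pair _ (eig_nonneg G hG hV v) (eig_le_two G hG hV v)
    rw [Finset.sum_congr rfl fun v _ => this v, Finset.sum_add_distrib, ← Finset.mul_sum]
    have hz : ∑ v : V, (if (normLap_isHermitian G).eigenvalues v = 0 then (1/2:ℝ) else 0)
        = 1/2 := sum_if_eigzero G hG hV
    rw [hz]
  linarith [hsum, hpair]

end KSum
section KStep
variable {V : Type} [Fintype V] [DecidableEq V] (G : SimpleGraph V)
variable [Fintype ↥G.edgeSet] [DecidableEq ↥G.edgeSet]

lemma kirchhoffStar_subdiv (hG : G.Connected) (hV : 2 ≤ Fintype.card V) :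
    kirchhoffStar (subdivision G) = 8 * kirchhoffStar G
      + 2 * (2 * ((Nat.card G.edgeSet : ℝ) - (Nat.card V : ℝ) + 1) - 1)
          * (Nat.card G.edgeSet : ℝ) := by
  unfold kirchhoffStar
  rw [subdiv_card_edge, kemeny_subdiv G hG hV]
  rw [Nat.card_eq_fintype_card (α := ↥G.edgeSet), Nat.card_eq_fintype_card (α := V)]
  push_cast
  ring

end KStep

lemma subdiv_edge_isEmpty {V : Type} (G : SimpleGraph V) (h : IsEmpty ↥G.edgeSet) :
    IsEmpty ↥(subdivision G).edgeSet := by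
  constructor
  rintro ⟨e, he⟩
  induction e using Sym2.ind with
  | _ x y =>
    rw [SimpleGraph.mem_edgeSet] at he
    rcases x with v | e
    · rcases y with w | e
      · exact he
      · exact h.elim e
    · exact h.elim e

lemma kirchhoffStar_zero_edges {V : Type} [Finite V] (G : SimpleGraph V)
    (h : Nat.card G.edgeSet = 0) : kirchhoffStar G = 0 := by
  unfold kirchhoffStar
  rw [h]
  norm_num


end KfAux

/-- `Kf*(sⁿ(G)) = 8ⁿ·Kf*(G) + ((8ⁿ − 2ⁿ)/3)(2r − 1)E₀` for all `n ≥ 0`. -/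
theorem kirchhoffStar_closed_form {V : Type} [Finite V] (G : SimpleGraph V)
    (hG : G.Connected) (r : ℤ)
    (hr : r = (Nat.card G.edgeSet : ℤ) - (Nat.card V : ℤ) + 1) (n : ℕ) :
    kirchhoffStar (iterSubdiv G n).2 =
      8 ^ n * kirchhoffStar G +
        ((8 ^ n - 2 ^ n : ℝ) / 3) * (2 * (r : ℝ) - 1) * (Nat.card G.edgeSet : ℝ) := by
  classical
  haveI : Fintype V := Fintype.ofFinite V
  by_cases hV2 : 2 ≤ Fintype.card V
  · -- main case
    have key : ∀ m : ℕ, (iterSubdiv G m).2.Connected ∧ 2 ≤ Nat.card (iterSubdiv G m).1 ∧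
        (Nat.card (iterSubdiv G m).2.edgeSet = 2^m * Nat.card G.edgeSet) ∧
        ((Nat.card (iterSubdiv G m).2.edgeSet : ℝ) - (Nat.card (iterSubdiv G m).1 : ℝ)
          = (Nat.card G.edgeSet : ℝ) - (Nat.card V : ℝ)) ∧
        kirchhoffStar (iterSubdiv G m).2 = 8 ^ m * kirchhoffStar G +
          ((8 ^ m - 2 ^ m : ℝ) / 3) * (2 * (r : ℝ) - 1) * (Nat.card G.edgeSet : ℝ) := by
      intro m
      induction m with
      | zero =>
        refine ⟨hG, ?_, ?_, ?_, ?_⟩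
        · show 2 ≤ Nat.card V
          rw [Nat.card_eq_fintype_card]
          exact hV2
        · show Nat.card G.edgeSet = 2^0 * Nat.card G.edgeSet
          norm_num
        · show (Nat.card G.edgeSet : ℝ) - (Nat.card V : ℝ)
            = (Nat.card G.edgeSet : ℝ) - (Nat.card V : ℝ)
          rfl
        · show kirchhoffStar G = 8^0 * kirchhoffStar G
            + ((8^0 - 2^0 : ℝ)/3) * (2 * (r : ℝ) - 1) * (Nat.card G.edgeSet : ℝ)
          norm_num
      | succ m ih =>
        obtain ⟨ihc, ihv, ihe, ihd, ihk⟩ := ih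
        haveI instFW : Finite (iterSubdiv G m).1 := iterSubdivFinite G m
        haveI instW : Fintype (iterSubdiv G m).1 := Fintype.ofFinite _
        haveI instDW : DecidableEq (iterSubdiv G m).1 := Classical.decEq _
        haveI instE : Fintype ↥(iterSubdiv G m).2.edgeSet := Fintype.ofFinite _
        haveI instDE : DecidableEq ↥(iterSubdiv G m).2.edgeSet := Classical.decEq _
        have hVm : 2 ≤ Fintype.card (iterSubdiv G m).1 := by
          rw [← Nat.card_eq_fintype_card]; exact ihv
        have hstep := KfAux.kirchhoffStar_subdiv (iterSubdiv G m).2 ihc hVm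
        have hconn := KfAux.subdiv_connected (iterSubdiv G m).2 ihc
        have hEcard := KfAux.subdiv_card_edge (iterSubdiv G m).2
        refine ⟨hconn, ?_, ?_, ?_, ?_⟩
        · show 2 ≤ Nat.card ((iterSubdiv G m).1 ⊕ ↥(iterSubdiv G m).2.edgeSet)
          rw [Nat.card_sum]
          omega
        · show Nat.card (subdivision (iterSubdiv G m).2).edgeSet = _
          rw [hEcard, ihe]
          ring
        · show (Nat.card (subdivision (iterSubdiv G m).2).edgeSet : ℝ)
            - (Nat.card ((iterSubdiv G m).1 ⊕ ↥(iterSubdiv G m).2.edgeSet) : ℝ) = _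
          rw [hEcard, Nat.card_sum]
          push_cast
          linarith [ihd]
        · show kirchhoffStar (subdivision (iterSubdiv G m).2) = _
          rw [hstep, ihk, ihd]
          have hEm : (Nat.card (iterSubdiv G m).2.edgeSet : ℝ)
              = 2^m * (Nat.card G.edgeSet : ℝ) := by
            rw [ihe]; push_cast; ring
          rw [hEm]
          have hrr : (r:ℝ) = (Nat.card G.edgeSet : ℝ) - (Nat.card V : ℝ) + 1 := by
            rw [hr]; push_cast; ring
          rw [hrr]
          ring
    exact (key n).2.2.2.2
  · -- degenerate case : |V| = 1, no edges
    have hne : Nonempty V := hG.nonempty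
    have hcard : Fintype.card V = 1 := by
      have := Fintype.card_pos (α := V)
      omega
    have hE : IsEmpty ↥G.edgeSet := by
      constructor
      rintro ⟨e, he⟩
      induction e using Sym2.ind with
      | _ x y =>
        rw [SimpleGraph.mem_edgeSet] at he
        have h1 := Fintype.card_le_one_iff.mp (le_of_eq hcard)
        exact he.ne (h1 x y)
    have hE0 : Nat.card G.edgeSet = 0 := @Nat.card_of_isEmpty _ hE
    have hiter : ∀ m, Nat.card (iterSubdiv G m).2.edgeSet = 0 := by
      intro m
      induction m with
      | zero => exact hE0
      | succ m ih =>
        haveI instFW : Finite (iterSubdiv G m).1 := iterSubdivFinite G m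
        have hie : IsEmpty ↥(iterSubdiv G m).2.edgeSet := by
          rw [Nat.card_eq_zero] at ih
          rcases ih with h | h
          · exact h
          · exact absurd h (by
              haveI : Finite ↥(iterSubdiv G m).2.edgeSet := inferInstance
              exact not_infinite_iff_finite.mpr this)
        exact @Nat.card_of_isEmpty _ (KfAux.subdiv_edge_isEmpty _ hie)
    rw [KfAux.kirchhoffStar_zero_edges _ (hiter n), KfAux.kirchhoffStar_zero_edges G hE0, hE0]
    norm_num
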